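/- Let θ1 ≥ 1 and θ2 ≤ −2 be integers, and suppose that v = θ2(θ2 + θ1 + θ1·θ2 − θ2²·θ1)/(θ1+1) and b = (1 + θ1 − θ2·θ1)(θ2 + θ1 + θ1·θ2 − θ2²·θ1)/(θ2·(θ1+1)) are positive integers; set k = θ2², λ = θ1 + 1, r = θ1(1 − θ2) + 1, x = −θ2, y = 0. Suppose M is a v×b {0,1}-matrix with all row sums r and all column sums k satisfying M·Mᵀ = (r−λ)·I + λ·J, and X is a symmetric b×b {0,1}-matrix with zero diagonal, X ≠ O and X ≠ J−I, satisfying Mᵀ·M = k·I + x·X + y·(J − I − X). Then the graph on v+b vertices with block adjacency matrix [[O, M],[Mᵀ, X]] is connected, its set of adjacency eigenvalues is exactly {θ2(θ1·θ2 − θ1 − 1), θ1, θ2}, and it has coherent rank 9. -/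

import Mathlib

open Matrix

/-- `θ` is an eigenvalue of the (real) adjacency matrix of `G`. -/
def adjEig {V : Type} [Fintype V] [DecidableEq V] (G : SimpleGraph V) [DecidableRel G.Adj]
    (θ : ℝ) : Prop :=
  ∃ f : V → ℝ, f ≠ 0 ∧ (SimpleGraph.adjMatrix ℝ G).mulVec f = θ • f

/-- `Γ ∈ 𝒢₃(θ0,θ1,θ2)`: `Γ` is connected and the set of eigenvalues of its adjacency
matrix is exactly `{θ0, θ1, θ2}`, where `θ0 > θ1 > θ2`. -/
def InG3 {V : Type} [Fintype V] [DecidableEq V] (G : SimpleGraph V) [DecidableRel G.Adj]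
    (θ0 θ1 θ2 : ℝ) : Prop :=
  G.Connected ∧ θ1 < θ0 ∧ θ2 < θ1 ∧ {θ : ℝ | adjEig G θ} = {θ0, θ1, θ2}

/-- A coherent configuration of rank `r` on the finite set `V`, given as a family of
`{0,1}`-matrices `A 1, …, A r`. -/
def IsCoherentConfig {V : Type} [Fintype V] [DecidableEq V] {r : ℕ}
    (A : Fin r → Matrix V V ℝ) : Prop :=
  (∀ i x y, A i x y = 0 ∨ A i x y = 1) ∧
  (∑ i, A i) = Matrix.of (fun _ _ => (1 : ℝ)) ∧
  (∀ i, ∃ j, (A i)ᵀ = A j) ∧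
  (∃ Δ : Finset (Fin r), ∑ i ∈ Δ, A i = 1) ∧
  (∀ i j, A i * A j ∈ Submodule.span ℝ (Set.range A))

/-- The coherent rank of `G` is `n`: `n` is the least rank of a coherent configuration on
the vertex set of `G` whose real linear span contains the adjacency matrix of `G`. -/
def HasCoherentRank {V : Type} [Fintype V] [DecidableEq V] (G : SimpleGraph V)
    [DecidableRel G.Adj] (n : ℕ) : Prop :=
  IsLeast {r : ℕ | ∃ A : Fin r → Matrix V V ℝ,
    IsCoherentConfig A ∧ SimpleGraph.adjMatrix ℝ G ∈ Submodule.span ℝ (Set.range A)} n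

set_option linter.unusedSectionVars false
set_option linter.unnecessarySeqFocus false

namespace Stmt11Aux

/-- all-ones matrix -/
def JJ (α β : Type) : Matrix α β ℝ := Matrix.of fun _ _ => (1:ℝ)

@[simp] lemma JJ_apply {α β : Type} (i : α) (j : β) : JJ α β i j = 1 := rfl

@[simp] lemma JJ_transpose {α β : Type} : (JJ α β)ᵀ = JJ β α := rfl

lemma mulJJ {α β γ : Type} [Fintype β] (M : Matrix α β ℝ) (r : ℝ)
    (h : ∀ i, ∑ j, M i j = r) : M * JJ β γ = r • JJ α γ := by
  ext i c
  simp only [Matrix.mul_apply, JJ, Matrix.of_apply, mul_one, Matrix.smul_apply,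
    smul_eq_mul, h i]

lemma JJmul {α β γ : Type} [Fintype α] (M : Matrix α β ℝ) (k : ℝ)
    (h : ∀ j, ∑ i, M i j = k) : JJ γ α * M = k • JJ γ β := by
  ext c j
  simp only [Matrix.mul_apply, JJ, Matrix.of_apply, one_mul, Matrix.smul_apply,
    smul_eq_mul, h j, mul_one]

lemma JJmulJJ {α β γ : Type} [Fintype β] :
    JJ α β * JJ β γ = (Fintype.card β : ℝ) • JJ α γ :=
  mulJJ _ _ (fun _ => by simp)

variable {V : Type} [Fintype V] [DecidableEq V] {r : ℕ} {A : Fin r → Matrix V V ℝ}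

lemma cc_mem (i : Fin r) : A i ∈ Submodule.span ℝ (Set.range A) :=
  Submodule.subset_span ⟨i, rfl⟩

lemma cc_J_mem (hA : IsCoherentConfig A) :
    Matrix.of (fun _ _ => (1:ℝ)) ∈ Submodule.span ℝ (Set.range A) := by
  rw [← hA.2.1]
  exact Submodule.sum_mem _ fun i _ => cc_mem i

lemma cc_one_mem (hA : IsCoherentConfig A) :
    (1 : Matrix V V ℝ) ∈ Submodule.span ℝ (Set.range A) := by
  obtain ⟨Δ, hΔ⟩ := hA.2.2.2.1
  rw [← hΔ]
  exact Submodule.sum_mem _ fun i _ => cc_mem i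

lemma cc_mul_mem (hA : IsCoherentConfig A) {B C : Matrix V V ℝ}
    (hB : B ∈ Submodule.span ℝ (Set.range A))
    (hC : C ∈ Submodule.span ℝ (Set.range A)) :
    B * C ∈ Submodule.span ℝ (Set.range A) := by
  have key : Submodule.span ℝ (Set.range A) * Submodule.span ℝ (Set.range A) ≤
      Submodule.span ℝ (Set.range A) := by
    rw [Submodule.span_mul_span, Submodule.span_le]
    rintro z ⟨x, ⟨i, rfl⟩, y, ⟨j, rfl⟩, rfl⟩
    exact hA.2.2.2.2 i j
  exact key (Submodule.mul_mem_mul hB hC)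

lemma cc_disjoint (hA : IsCoherentConfig A) {i j : Fin r} (hij : i ≠ j) :
    A i ⊙ A j = 0 := by
  ext x y
  simp only [Matrix.hadamard_apply, Matrix.zero_apply]
  by_contra h
  have hi : A i x y = 1 := by rcases hA.1 i x y with h'|h' <;> simp [h'] at h ⊢
  have hj : A j x y = 1 := by rcases hA.1 j x y with h'|h' <;> simp [h'] at h ⊢
  have hsum : (∑ l, A l x y) = 1 := by
    have := congrFun (congrFun hA.2.1 x) y
    simpa [Matrix.sum_apply] using this
  have h2 : (2:ℝ) ≤ ∑ l, A l x y := by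
    have : ∑ l ∈ ({i, j} : Finset (Fin r)), A l x y ≤ ∑ l, A l x y := by
      apply Finset.sum_le_sum_of_subset_of_nonneg (Finset.subset_univ _)
      intro l _ _
      rcases hA.1 l x y with h'|h' <;> simp [h']
    rw [Finset.sum_pair hij, hi, hj] at this
    linarith
  rw [hsum] at h2; norm_num at h2

lemma cc_self_hadamard (hA : IsCoherentConfig A) (i : Fin r) : A i ⊙ A i = A i := by
  ext x y
  rcases hA.1 i x y with h|h <;> simp [Matrix.hadamard_apply, h]

lemma cc_hadamard_mem (hA : IsCoherentConfig A) {B C : Matrix V V ℝ}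
    (hB : B ∈ Submodule.span ℝ (Set.range A))
    (hC : C ∈ Submodule.span ℝ (Set.range A)) :
    B ⊙ C ∈ Submodule.span ℝ (Set.range A) := by
  induction hB using Submodule.span_induction with
  | mem x hx =>
    obtain ⟨i, rfl⟩ := hx
    induction hC using Submodule.span_induction with
    | mem y hy =>
      obtain ⟨j, rfl⟩ := hy
      by_cases hij : i = j
      · subst hij; rw [cc_self_hadamard hA]; exact cc_mem i
      · rw [cc_disjoint hA hij]; exact Submodule.zero_mem _
    | zero => rw [Matrix.hadamard_zero]; exact Submodule.zero_mem _
    | add y z _ _ hy hz => rw [Matrix.hadamard_add]; exact Submodule.add_mem _ hy hz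
    | smul a y _ hy => rw [Matrix.hadamard_smul]; exact Submodule.smul_mem _ a hy
  | zero => rw [Matrix.zero_hadamard]; exact Submodule.zero_mem _
  | add y z _ _ hy hz => rw [Matrix.add_hadamard]; exact Submodule.add_mem _ hy hz
  | smul a y _ hy => rw [Matrix.smul_hadamard]; exact Submodule.smul_mem _ a hy

lemma card_le_of_li {n : ℕ} (F : Fin n → Matrix V V ℝ)
    (hli : LinearIndependent ℝ F)
    (hmem : ∀ i, F i ∈ Submodule.span ℝ (Set.range A)) : n ≤ r := by
  classical
  set W := Submodule.span ℝ (Set.range A) with hW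
  have h1 : Module.finrank ℝ W ≤ r := by
    have h := finrank_span_le_card (R := ℝ) (Set.range A)
    refine h.trans ?_
    rw [Set.toFinset_range]
    exact (Finset.card_image_le).trans (by simp)
  have h2 : n ≤ Module.finrank ℝ W := by
    have hli' : LinearIndependent ℝ (fun i => (⟨F i, hmem i⟩ : W)) := by
      apply LinearIndependent.of_comp W.subtype
      exact hli
    simpa using hli'.fintype_card_le_finrank
  omega

lemma elim_mulVec {v b : ℕ} (P : Matrix (Fin v) (Fin v) ℝ) (B : Matrix (Fin v) (Fin b) ℝ)
    (C : Matrix (Fin b) (Fin v) ℝ) (D : Matrix (Fin b) (Fin b) ℝ)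
    (f : Fin v → ℝ) (g : Fin b → ℝ) :
    (Matrix.fromBlocks P B C D) *ᵥ (Sum.elim f g)
      = Sum.elim (P *ᵥ f + B *ᵥ g) (C *ᵥ f + D *ᵥ g) := by
  funext u
  cases u with
  | inl i => simp [Matrix.mulVec, dotProduct, Fintype.sum_sum_type]
  | inr j => simp [Matrix.mulVec, dotProduct, Fintype.sum_sum_type]

lemma smul_elim {α β : Type} (t : ℝ) (f : α → ℝ) (g : β → ℝ) :
    t • Sum.elim f g = Sum.elim (t • f) (t • g) := by
  funext u; cases u <;> rfl

lemma elim_congr {α β γ : Type} {f f' : α → γ} {g g' : β → γ}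
    (h1 : f = f') (h2 : g = g') : Sum.elim f g = Sum.elim f' g' := by rw [h1, h2]

lemma JJ_mulVec {α β : Type} [Fintype β] (f : β → ℝ) :
    JJ α β *ᵥ f = fun _ => ∑ j, f j := by
  funext i; simp [Matrix.mulVec, dotProduct, JJ]

lemma mulVec_const {α β : Type} [Fintype β] (M : Matrix α β ℝ) (t : ℝ) :
    M *ᵥ (fun _ => t) = fun i => (∑ j, M i j) * t := by
  funext i; simp [Matrix.mulVec, dotProduct, Finset.sum_mul]

lemma fromBlocks_JJ {v b : ℕ} :
    Matrix.fromBlocks (JJ (Fin v) (Fin v)) (JJ (Fin v) (Fin b))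
      (JJ (Fin b) (Fin v)) (JJ (Fin b) (Fin b))
    = (Matrix.of fun _ _ => (1:ℝ) : Matrix (Fin v ⊕ Fin b) (Fin v ⊕ Fin b) ℝ) := by
  funext u w
  rcases u with u|u <;> rcases w with w|w <;> rfl

section push
variable {l m n o : Type}

lemma fbTL_add (P Q : Matrix n l ℝ) :
    (Matrix.fromBlocks (P+Q) 0 0 0 : Matrix (n ⊕ o) (l ⊕ m) ℝ)
      = Matrix.fromBlocks P 0 0 0 + Matrix.fromBlocks Q 0 0 0 := by
  ext u w; rcases u with u|u <;> rcases w with w|w <;> simp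

lemma fbTL_sub (P Q : Matrix n l ℝ) :
    (Matrix.fromBlocks (P-Q) 0 0 0 : Matrix (n ⊕ o) (l ⊕ m) ℝ)
      = Matrix.fromBlocks P 0 0 0 - Matrix.fromBlocks Q 0 0 0 := by
  ext u w; rcases u with u|u <;> rcases w with w|w <;> simp

lemma fbTL_smul (s : ℝ) (P : Matrix n l ℝ) :
    (Matrix.fromBlocks (s • P) 0 0 0 : Matrix (n ⊕ o) (l ⊕ m) ℝ)
      = s • Matrix.fromBlocks P 0 0 0 := by
  ext u w; rcases u with u|u <;> rcases w with w|w <;> simp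

lemma fbTR_add (P Q : Matrix n m ℝ) :
    (Matrix.fromBlocks 0 (P+Q) 0 0 : Matrix (n ⊕ o) (l ⊕ m) ℝ)
      = Matrix.fromBlocks 0 P 0 0 + Matrix.fromBlocks 0 Q 0 0 := by
  ext u w; rcases u with u|u <;> rcases w with w|w <;> simp

lemma fbTR_sub (P Q : Matrix n m ℝ) :
    (Matrix.fromBlocks 0 (P-Q) 0 0 : Matrix (n ⊕ o) (l ⊕ m) ℝ)
      = Matrix.fromBlocks 0 P 0 0 - Matrix.fromBlocks 0 Q 0 0 := by
  ext u w; rcases u with u|u <;> rcases w with w|w <;> simp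

lemma fbTR_smul (s : ℝ) (P : Matrix n m ℝ) :
    (Matrix.fromBlocks 0 (s • P) 0 0 : Matrix (n ⊕ o) (l ⊕ m) ℝ)
      = s • Matrix.fromBlocks 0 P 0 0 := by
  ext u w; rcases u with u|u <;> rcases w with w|w <;> simp

lemma fbBL_add (P Q : Matrix o l ℝ) :
    (Matrix.fromBlocks 0 0 (P+Q) 0 : Matrix (n ⊕ o) (l ⊕ m) ℝ)
      = Matrix.fromBlocks 0 0 P 0 + Matrix.fromBlocks 0 0 Q 0 := by
  ext u w; rcases u with u|u <;> rcases w with w|w <;> simp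

lemma fbBL_sub (P Q : Matrix o l ℝ) :
    (Matrix.fromBlocks 0 0 (P-Q) 0 : Matrix (n ⊕ o) (l ⊕ m) ℝ)
      = Matrix.fromBlocks 0 0 P 0 - Matrix.fromBlocks 0 0 Q 0 := by
  ext u w; rcases u with u|u <;> rcases w with w|w <;> simp

lemma fbBL_smul (s : ℝ) (P : Matrix o l ℝ) :
    (Matrix.fromBlocks 0 0 (s • P) 0 : Matrix (n ⊕ o) (l ⊕ m) ℝ)
      = s • Matrix.fromBlocks 0 0 P 0 := by
  ext u w; rcases u with u|u <;> rcases w with w|w <;> simp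

lemma fbBR_add (P Q : Matrix o m ℝ) :
    (Matrix.fromBlocks 0 0 0 (P+Q) : Matrix (n ⊕ o) (l ⊕ m) ℝ)
      = Matrix.fromBlocks 0 0 0 P + Matrix.fromBlocks 0 0 0 Q := by
  ext u w; rcases u with u|u <;> rcases w with w|w <;> simp

lemma fbBR_sub (P Q : Matrix o m ℝ) :
    (Matrix.fromBlocks 0 0 0 (P-Q) : Matrix (n ⊕ o) (l ⊕ m) ℝ)
      = Matrix.fromBlocks 0 0 0 P - Matrix.fromBlocks 0 0 0 Q := by
  ext u w; rcases u with u|u <;> rcases w with w|w <;> simp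

lemma fbBR_smul (s : ℝ) (P : Matrix o m ℝ) :
    (Matrix.fromBlocks 0 0 0 (s • P) : Matrix (n ⊕ o) (l ⊕ m) ℝ)
      = s • Matrix.fromBlocks 0 0 0 P := by
  ext u w; rcases u with u|u <;> rcases w with w|w <;> simp

end push

lemma hadamard_fromBlocks {l m n o : Type}
    (A : Matrix n l ℝ) (B : Matrix n m ℝ) (C : Matrix o l ℝ) (D : Matrix o m ℝ)
    (A' : Matrix n l ℝ) (B' : Matrix n m ℝ) (C' : Matrix o l ℝ) (D' : Matrix o m ℝ) :
    Matrix.fromBlocks A B C D ⊙ Matrix.fromBlocks A' B' C' D'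
      = Matrix.fromBlocks (A ⊙ A') (B ⊙ B') (C ⊙ C') (D ⊙ D') := by
  ext u w; rcases u with u|u <;> rcases w with w|w <;> simp [Matrix.hadamard_apply]

lemma hadamard_JJ {α β : Type} (P : Matrix α β ℝ) : P ⊙ JJ α β = P := by
  ext u w; simp [Matrix.hadamard_apply, JJ]

lemma fromBlocks_sub {l m n o : Type}
    (A A' : Matrix n l ℝ) (B B' : Matrix n m ℝ) (C C' : Matrix o l ℝ) (D D' : Matrix o m ℝ) :
    Matrix.fromBlocks A B C D - Matrix.fromBlocks A' B' C' D'
      = Matrix.fromBlocks (A - A') (B - B') (C - C') (D - D') := by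
  ext u w; rcases u with u|u <;> rcases w with w|w <;> simp

lemma sum9 {A : Type} [AddCommMonoid A] (f : Fin 9 → A) :
    ∑ i, f i = f 0 + (f 1 + (f 2 + (f 3 + (f 4 + (f 5 + (f 6 + (f 7 + f 8))))))) := by
  simp only [Fin.sum_univ_succ, Fin.sum_univ_zero, add_zero]
  rfl

end Stmt11Aux





namespace Stmt11Aux

set_option maxHeartbeats 3000000 in
lemma partA {v b : ℕ} (a c : ℝ)
    (M : Matrix (Fin v) (Fin b) ℝ) (X : Matrix (Fin b) (Fin b) ℝ)
    (hM01 : ∀ i j, M i j = 0 ∨ M i j = 1)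
    (hX01 : ∀ i j, X i j = 0 ∨ X i j = 1)
    (hXdiag : ∀ i, X i i = 0)
    (hXsymm : Xᵀ = X)
    (hMMt' : M * Mᵀ = (-(a*c)) • 1 + (a+1) • JJ (Fin v) (Fin v))
    (hS : Mᵀ * M = c^2 • 1 + (-c) • X)
    (hMX : M * X = (a+c) • M + (-(c*(a+1))) • JJ (Fin v) (Fin b))
    (hXMt : X * Mᵀ = (a+c) • Mᵀ + (-(c*(a+1))) • JJ (Fin b) (Fin v))
    (hXX : X*X = (-(c*(a+c))) • 1 + (a+2*c) • X + ((a+1)*c^2) • JJ (Fin b) (Fin b))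
    (h_MJbb : M * JJ (Fin b) (Fin b) = (a*(1-c)+1) • JJ (Fin v) (Fin b))
    (h_MJbv : M * JJ (Fin b) (Fin v) = (a*(1-c)+1) • JJ (Fin v) (Fin v))
    (h_JvvM : JJ (Fin v) (Fin v) * M = c^2 • JJ (Fin v) (Fin b))
    (h_JbvM : JJ (Fin b) (Fin v) * M = c^2 • JJ (Fin b) (Fin b))
    (h_MtJvv : Mᵀ * JJ (Fin v) (Fin v) = c^2 • JJ (Fin b) (Fin v))
    (h_MtJvb : Mᵀ * JJ (Fin v) (Fin b) = c^2 • JJ (Fin b) (Fin b))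
    (h_JvbMt : JJ (Fin v) (Fin b) * Mᵀ = (a*(1-c)+1) • JJ (Fin v) (Fin v))
    (h_JbbMt : JJ (Fin b) (Fin b) * Mᵀ = (a*(1-c)+1) • JJ (Fin b) (Fin v))
    (h_XJbv : X * JJ (Fin b) (Fin v) = (a*c^2-a*c) • JJ (Fin b) (Fin v))
    (hXJbb : X * JJ (Fin b) (Fin b) = (a*c^2-a*c) • JJ (Fin b) (Fin b))
    (h_JvbX : JJ (Fin v) (Fin b) * X = (a*c^2-a*c) • JJ (Fin v) (Fin b))
    (h_JbbX : JJ (Fin b) (Fin b) * X = (a*c^2-a*c) • JJ (Fin b) (Fin b)) :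
    ∃ A9 : Fin 9 → Matrix (Fin v ⊕ Fin b) (Fin v ⊕ Fin b) ℝ,
      IsCoherentConfig A9 ∧
        Matrix.fromBlocks 0 M Mᵀ X ∈ Submodule.span ℝ (Set.range A9) := by
  classical
  set Jvv := JJ (Fin v) (Fin v) with hJvv
  set Jvb := JJ (Fin v) (Fin b) with hJvb
  set Jbv := JJ (Fin b) (Fin v) with hJbv
  set Jbb := JJ (Fin b) (Fin b) with hJbb
  have h_JvvJvv : Jvv * Jvv = (v:ℝ) • Jvv := by
    rw [hJvv]; simpa using JJmulJJ (α := Fin v) (β := Fin v) (γ := Fin v)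
  have h_JvvJvb : Jvv * Jvb = (v:ℝ) • Jvb := by
    rw [hJvv, hJvb]; simpa using JJmulJJ (α := Fin v) (β := Fin v) (γ := Fin b)
  have h_JvbJbv : Jvb * Jbv = (b:ℝ) • Jvv := by
    rw [hJvv, hJvb, hJbv]; simpa using JJmulJJ (α := Fin v) (β := Fin b) (γ := Fin v)
  have h_JvbJbb : Jvb * Jbb = (b:ℝ) • Jvb := by
    rw [hJvb, hJbb]; simpa using JJmulJJ (α := Fin v) (β := Fin b) (γ := Fin b)
  have h_JbvJvv : Jbv * Jvv = (v:ℝ) • Jbv := by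
    rw [hJvv, hJbv]; simpa using JJmulJJ (α := Fin b) (β := Fin v) (γ := Fin v)
  have h_JbvJvb : Jbv * Jvb = (v:ℝ) • Jbb := by
    rw [hJvb, hJbv, hJbb]; simpa using JJmulJJ (α := Fin b) (β := Fin v) (γ := Fin b)
  have h_JbbJbv : Jbb * Jbv = (b:ℝ) • Jbv := by
    rw [hJbv, hJbb]; simpa using JJmulJJ (α := Fin b) (β := Fin b) (γ := Fin v)
  have h_JbbJbb : Jbb * Jbb = (b:ℝ) • Jbb := by
    rw [hJbb]; simpa using JJmulJJ (α := Fin b) (β := Fin b) (γ := Fin b)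
  set A9 : Fin 9 → Matrix (Fin v ⊕ Fin b) (Fin v ⊕ Fin b) ℝ :=
    ![Matrix.fromBlocks 1 0 0 0,
      Matrix.fromBlocks (Jvv - 1) 0 0 0,
      Matrix.fromBlocks 0 M 0 0,
      Matrix.fromBlocks 0 (Jvb - M) 0 0,
      Matrix.fromBlocks 0 0 Mᵀ 0,
      Matrix.fromBlocks 0 0 (Jbv - Mᵀ) 0,
      Matrix.fromBlocks 0 0 0 1,
      Matrix.fromBlocks 0 0 0 X,
      Matrix.fromBlocks 0 0 0 (Jbb - 1 - X)] with hA9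
  have hA0' : ∀ (h : 0 < 9), A9 ⟨0, h⟩ = Matrix.fromBlocks 1 0 0 0 := by
    intro h; rw [hA9]; rfl
  have hA1' : ∀ (h : 1 < 9), A9 ⟨1, h⟩ = Matrix.fromBlocks (Jvv - 1) 0 0 0 := by
    intro h; rw [hA9]; rfl
  have hA2' : ∀ (h : 2 < 9), A9 ⟨2, h⟩ = Matrix.fromBlocks 0 M 0 0 := by
    intro h; rw [hA9]; rfl
  have hA3' : ∀ (h : 3 < 9), A9 ⟨3, h⟩ = Matrix.fromBlocks 0 (Jvb - M) 0 0 := by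
    intro h; rw [hA9]; rfl
  have hA4' : ∀ (h : 4 < 9), A9 ⟨4, h⟩ = Matrix.fromBlocks 0 0 Mᵀ 0 := by
    intro h; rw [hA9]; rfl
  have hA5' : ∀ (h : 5 < 9), A9 ⟨5, h⟩ = Matrix.fromBlocks 0 0 (Jbv - Mᵀ) 0 := by
    intro h; rw [hA9]; rfl
  have hA6' : ∀ (h : 6 < 9), A9 ⟨6, h⟩ = Matrix.fromBlocks 0 0 0 1 := by
    intro h; rw [hA9]; rfl
  have hA7' : ∀ (h : 7 < 9), A9 ⟨7, h⟩ = Matrix.fromBlocks 0 0 0 X := by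
    intro h; rw [hA9]; rfl
  have hA8' : ∀ (h : 8 < 9), A9 ⟨8, h⟩ = Matrix.fromBlocks 0 0 0 (Jbb - 1 - X) := by
    intro h; rw [hA9]; rfl
  have m0 : Matrix.fromBlocks 1 0 0 0 ∈ Submodule.span ℝ (Set.range A9) := by
    rw [← hA0' (by norm_num)]; exact Submodule.subset_span ⟨_, rfl⟩
  have m1 : Matrix.fromBlocks (Jvv - 1) 0 0 0 ∈ Submodule.span ℝ (Set.range A9) := by
    rw [← hA1' (by norm_num)]; exact Submodule.subset_span ⟨_, rfl⟩
  have m2 : Matrix.fromBlocks 0 M 0 0 ∈ Submodule.span ℝ (Set.range A9) := by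
    rw [← hA2' (by norm_num)]; exact Submodule.subset_span ⟨_, rfl⟩
  have m3 : Matrix.fromBlocks 0 (Jvb - M) 0 0 ∈ Submodule.span ℝ (Set.range A9) := by
    rw [← hA3' (by norm_num)]; exact Submodule.subset_span ⟨_, rfl⟩
  have m4 : Matrix.fromBlocks 0 0 Mᵀ 0 ∈ Submodule.span ℝ (Set.range A9) := by
    rw [← hA4' (by norm_num)]; exact Submodule.subset_span ⟨_, rfl⟩
  have m5 : Matrix.fromBlocks 0 0 (Jbv - Mᵀ) 0 ∈ Submodule.span ℝ (Set.range A9) := by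
    rw [← hA5' (by norm_num)]; exact Submodule.subset_span ⟨_, rfl⟩
  have m6 : Matrix.fromBlocks 0 0 0 1 ∈ Submodule.span ℝ (Set.range A9) := by
    rw [← hA6' (by norm_num)]; exact Submodule.subset_span ⟨_, rfl⟩
  have m7 : Matrix.fromBlocks 0 0 0 X ∈ Submodule.span ℝ (Set.range A9) := by
    rw [← hA7' (by norm_num)]; exact Submodule.subset_span ⟨_, rfl⟩
  have m8 : Matrix.fromBlocks 0 0 0 (Jbb - 1 - X) ∈ Submodule.span ℝ (Set.range A9) := by
    rw [← hA8' (by norm_num)]; exact Submodule.subset_span ⟨_, rfl⟩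
  have mTLJ : Matrix.fromBlocks Jvv 0 0 0 ∈ Submodule.span ℝ (Set.range A9) := by
    have e : (Matrix.fromBlocks Jvv 0 0 0 : Matrix (Fin v ⊕ Fin b) (Fin v ⊕ Fin b) ℝ)
        = Matrix.fromBlocks 1 0 0 0 + Matrix.fromBlocks (Jvv - 1) 0 0 0 := by
      rw [← fbTL_add, Matrix.fromBlocks_inj]
      exact ⟨by module, rfl, rfl, rfl⟩
    rw [e]; exact Submodule.add_mem _ m0 m1
  have mTRJ : Matrix.fromBlocks 0 Jvb 0 0 ∈ Submodule.span ℝ (Set.range A9) := by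
    have e : (Matrix.fromBlocks 0 Jvb 0 0 : Matrix (Fin v ⊕ Fin b) (Fin v ⊕ Fin b) ℝ)
        = Matrix.fromBlocks 0 M 0 0 + Matrix.fromBlocks 0 (Jvb - M) 0 0 := by
      rw [← fbTR_add, Matrix.fromBlocks_inj]
      exact ⟨rfl, by module, rfl, rfl⟩
    rw [e]; exact Submodule.add_mem _ m2 m3
  have mBLJ : Matrix.fromBlocks 0 0 Jbv 0 ∈ Submodule.span ℝ (Set.range A9) := by
    have e : (Matrix.fromBlocks 0 0 Jbv 0 : Matrix (Fin v ⊕ Fin b) (Fin v ⊕ Fin b) ℝ)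
        = Matrix.fromBlocks 0 0 Mᵀ 0 + Matrix.fromBlocks 0 0 (Jbv - Mᵀ) 0 := by
      rw [← fbBL_add, Matrix.fromBlocks_inj]
      exact ⟨rfl, rfl, by module, rfl⟩
    rw [e]; exact Submodule.add_mem _ m4 m5
  have mBRJ : Matrix.fromBlocks 0 0 0 Jbb ∈ Submodule.span ℝ (Set.range A9) := by
    have e : (Matrix.fromBlocks 0 0 0 Jbb : Matrix (Fin v ⊕ Fin b) (Fin v ⊕ Fin b) ℝ)
        = Matrix.fromBlocks 0 0 0 1 + Matrix.fromBlocks 0 0 0 X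
          + Matrix.fromBlocks 0 0 0 (Jbb - 1 - X) := by
      rw [← fbBR_add, ← fbBR_add, Matrix.fromBlocks_inj]
      exact ⟨rfl, rfl, rfl, by module⟩
    rw [e]; exact Submodule.add_mem _ (Submodule.add_mem _ m6 m7) m8
  refine ⟨A9, ⟨?_, ?_, ?_, ?_, ?_⟩, ?_⟩
  · -- 0/1 entries
    intro i x y
    have one01 : ∀ {n : ℕ} (p q : Fin n), (1 : Matrix (Fin n) (Fin n) ℝ) p q = 0 ∨
        (1 : Matrix (Fin n) (Fin n) ℝ) p q = 1 := by
      intro n p q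
      rcases eq_or_ne p q with rfl | h
      · right; exact Matrix.one_apply_eq _
      · left; exact Matrix.one_apply_ne h
    fin_cases i <;>
      simp only [hA0', hA1', hA2', hA3', hA4', hA5', hA6', hA7', hA8'] <;>
      rcases x with x|x <;> rcases y with y|y <;>
      simp only [Matrix.fromBlocks_apply₁₁, Matrix.fromBlocks_apply₁₂,
        Matrix.fromBlocks_apply₂₁, Matrix.fromBlocks_apply₂₂,
        Matrix.zero_apply, Matrix.sub_apply, Matrix.transpose_apply, hJvv, hJvb,
        hJbv, hJbb, JJ_apply, eq_self_iff_true, true_or, or_true]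
    · exact one01 x y
    · rcases eq_or_ne x y with rfl | h
      · left; simp [Matrix.one_apply_eq]
      · right; simp [Matrix.one_apply_ne h]
    · exact hM01 x y
    · rcases hM01 x y with h | h <;> rw [h] <;> norm_num
    · exact hM01 y x
    · rcases hM01 y x with h | h <;> rw [h] <;> norm_num
    · exact one01 x y
    · exact hX01 x y
    · rcases eq_or_ne x y with rfl | h
      · left; rw [Matrix.one_apply_eq, hXdiag]; ring
      · rcases hX01 x y with h2 | h2 <;> rw [Matrix.one_apply_ne h, h2] <;> norm_num
  · -- sum = J
    rw [hA9]
    funext u w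
    simp only [Matrix.sum_apply]
    rcases u with u|u <;> rcases w with w|w <;>
      simp [Fin.sum_univ_succ, hJvv, hJvb, hJbv, hJbb, JJ, Matrix.one_apply] <;>
      try ring
  · -- transposes
    intro i
    fin_cases i <;>
      simp only [hA0', hA1', hA2', hA3', hA4', hA5', hA6', hA7', hA8']
    · exact ⟨⟨0, by norm_num⟩, by rw [Matrix.fromBlocks_transpose, hA0' (by norm_num)]; simp⟩
    · refine ⟨⟨1, by norm_num⟩, ?_⟩
      rw [Matrix.fromBlocks_transpose, hA1' (by norm_num)]
      simp [Matrix.transpose_sub, hJvv]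
    · refine ⟨⟨4, by norm_num⟩, ?_⟩
      rw [Matrix.fromBlocks_transpose, hA4' (by norm_num)]
      simp
    · refine ⟨⟨5, by norm_num⟩, ?_⟩
      rw [Matrix.fromBlocks_transpose, hA5' (by norm_num)]
      simp [Matrix.transpose_sub, hJvb, hJbv]
    · refine ⟨⟨2, by norm_num⟩, ?_⟩
      rw [Matrix.fromBlocks_transpose, hA2' (by norm_num)]
      simp
    · refine ⟨⟨3, by norm_num⟩, ?_⟩
      rw [Matrix.fromBlocks_transpose, hA3' (by norm_num)]
      simp [Matrix.transpose_sub, hJvb, hJbv]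
    · exact ⟨⟨6, by norm_num⟩, by rw [Matrix.fromBlocks_transpose, hA6' (by norm_num)]; simp⟩
    · exact ⟨⟨7, by norm_num⟩, by rw [Matrix.fromBlocks_transpose, hA7' (by norm_num)]; simp [hXsymm]⟩
    · refine ⟨⟨8, by norm_num⟩, ?_⟩
      rw [Matrix.fromBlocks_transpose, hA8' (by norm_num)]
      simp [Matrix.transpose_sub, hJbb, hXsymm]
  · -- identity
    refine ⟨{⟨0, by norm_num⟩, ⟨6, by norm_num⟩}, ?_⟩
    rw [Finset.sum_pair (by decide), hA0' (by norm_num), hA6' (by norm_num),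
      Matrix.fromBlocks_add, ← Matrix.fromBlocks_one]
    simp
  · -- products
    intro i j
    fin_cases i <;> fin_cases j <;>
      simp only [hA0', hA1', hA2', hA3', hA4', hA5', hA6', hA7', hA8',
        Matrix.fromBlocks_multiply,
        Matrix.mul_zero, Matrix.zero_mul, add_zero, zero_add,
        Matrix.mul_one, Matrix.one_mul,
        Matrix.mul_sub, Matrix.sub_mul, Matrix.mul_add, Matrix.add_mul,
        Matrix.smul_mul, Matrix.mul_smul,
        hMMt', hS, hMX, hXMt, hXX,
        h_MJbv, h_MJbb, h_JvvM, h_JbvM, h_MtJvv, h_MtJvb, h_JvbMt, h_JbbMt,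
        h_XJbv, hXJbb, h_JvbX, h_JbbX,
        h_JvvJvv, h_JvvJvb, h_JvbJbv, h_JvbJbb, h_JbvJvv, h_JbvJvb, h_JbbJbv,
        h_JbbJbb,
        fbTL_add, fbTL_sub, fbTL_smul, fbTR_add, fbTR_sub, fbTR_smul,
        fbBL_add, fbBL_sub, fbBL_smul, fbBR_add, fbBR_sub, fbBR_smul,
        Matrix.fromBlocks_zero] <;>
      (repeat
        first
          | exact Submodule.zero_mem _
          | assumption
          | apply Submodule.add_mem
          | apply Submodule.sub_mem
          | apply Submodule.neg_mem
          | apply Submodule.smul_mem)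
  · -- adjacency matrix in span
    have e : Matrix.fromBlocks 0 M Mᵀ X
        = Matrix.fromBlocks 0 M 0 0 + Matrix.fromBlocks 0 0 Mᵀ 0
          + Matrix.fromBlocks 0 0 0 X := by
      ext u w
      rcases u with u|u <;> rcases w with w|w <;> simp
    rw [e]
    exact Submodule.add_mem _ (Submodule.add_mem _ m2 m4) m7

end Stmt11Aux

namespace Stmt11Aux

set_option maxHeartbeats 3000000 in
lemma partB {v b : ℕ} (a c : ℝ)
    (M : Matrix (Fin v) (Fin b) ℝ) (X : Matrix (Fin b) (Fin b) ℝ)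
    (hXdiag : ∀ i, X i i = 0)
    (hMMt' : M * Mᵀ = (-(a*c)) • 1 + (a+1) • JJ (Fin v) (Fin v))
    (hS : Mᵀ * M = c^2 • 1 + (-c) • X)
    (hXX : X*X = (-(c*(a+c))) • 1 + (a+2*c) • X + ((a+1)*c^2) • JJ (Fin b) (Fin b))
    (hne : (a*(1-c)+1) - (c^2 + (a*c^2 - a*c)) ≠ 0)
    (i0 i1 : Fin v) (hi01 : i0 ≠ i1)
    (iM : Fin v) (jM : Fin b) (hM1 : M iM jM = 1)
    (iz : Fin v) (jz : Fin b) (hM0 : M iz jz = 0)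
    (p1 q1 : Fin b) (hX1 : X p1 q1 = 1)
    (p2 q2 : Fin b) (hq2 : p2 ≠ q2) (hX0 : X p2 q2 = 0)
    {m : ℕ} (B : Fin m → Matrix (Fin v ⊕ Fin b) (Fin v ⊕ Fin b) ℝ)
    (hB : IsCoherentConfig B)
    (hmem : Matrix.fromBlocks 0 M Mᵀ X ∈ Submodule.span ℝ (Set.range B)) :
    9 ≤ m := by
  classical
  set Jvv := JJ (Fin v) (Fin v) with hJvv
  set Jvb := JJ (Fin v) (Fin b) with hJvb
  set Jbv := JJ (Fin b) (Fin v) with hJbv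
  set Jbb := JJ (Fin b) (Fin b) with hJbb
  set W := Submodule.span ℝ (Set.range B) with hW
  have hI : (1 : Matrix (Fin v ⊕ Fin b) (Fin v ⊕ Fin b) ℝ) ∈ W := cc_one_mem hB
  have hJmem : Matrix.fromBlocks Jvv Jvb Jbv Jbb ∈ W := by
    rw [hJvv, hJvb, hJbv, hJbb, fromBlocks_JJ]
    exact cc_J_mem hB
  have hAA : Matrix.fromBlocks 0 M Mᵀ X * Matrix.fromBlocks 0 M Mᵀ X
      = Matrix.fromBlocks (M*Mᵀ) (M*X) (X*Mᵀ) (Mᵀ*M + X*X) := by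
    rw [Matrix.fromBlocks_multiply]
    simp
  have hDeg : (Matrix.fromBlocks 0 M Mᵀ X * Matrix.fromBlocks 0 M Mᵀ X)
        ⊙ (1 : Matrix (Fin v ⊕ Fin b) (Fin v ⊕ Fin b) ℝ)
      = Matrix.fromBlocks ((a*(1-c)+1) • 1) 0 0 ((c^2 + (a*c^2 - a*c)) • 1) := by
    rw [hAA, hMMt', hS, hXX]
    ext u w
    rcases u with u|u <;> rcases w with w|w
    · rcases eq_or_ne u w with rfl | h
      · simp [Matrix.one_apply, Matrix.hadamard_apply, hJvv, JJ]
        ring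
      · simp [Matrix.one_apply, Matrix.hadamard_apply, h, hJvv, JJ]
    · simp [Matrix.hadamard_apply, Matrix.one_apply]
    · simp [Matrix.hadamard_apply, Matrix.one_apply]
    · rcases eq_or_ne u w with rfl | h
      · simp [Matrix.one_apply, Matrix.hadamard_apply, hXdiag, hJbb, JJ]
        ring
      · simp [Matrix.one_apply, Matrix.hadamard_apply, h, hJbb, JJ]
  have hDegMem : Matrix.fromBlocks ((a*(1-c)+1) • 1) 0 0 ((c^2 + (a*c^2 - a*c)) • 1) ∈ W := by
    rw [← hDeg]
    exact cc_hadamard_mem hB (cc_mul_mem hB hmem hmem) hI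
  have hEv : Matrix.fromBlocks (1 : Matrix (Fin v) (Fin v) ℝ) 0 0
      (0 : Matrix (Fin b) (Fin b) ℝ) ∈ W := by
    have e : Matrix.fromBlocks (1 : Matrix (Fin v) (Fin v) ℝ) 0 0
          (0 : Matrix (Fin b) (Fin b) ℝ)
        = ((a*(1-c)+1) - (c^2 + (a*c^2 - a*c)))⁻¹ •
          (Matrix.fromBlocks ((a*(1-c)+1) • 1) 0 0 ((c^2 + (a*c^2 - a*c)) • 1)
            - (c^2 + (a*c^2 - a*c)) • (1 : Matrix (Fin v ⊕ Fin b) (Fin v ⊕ Fin b) ℝ)) := by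
      rw [show (1 : Matrix (Fin v ⊕ Fin b) (Fin v ⊕ Fin b) ℝ)
          = Matrix.fromBlocks 1 0 0 1 from (Matrix.fromBlocks_one).symm,
        Matrix.fromBlocks_smul, fromBlocks_sub, Matrix.fromBlocks_smul,
        Matrix.fromBlocks_inj]
      refine ⟨?_, by simp, by simp, by simp⟩
      match_scalars
      field_simp
      exact (div_self (by intro h; apply hne; linear_combination h)).symm
    rw [e]
    exact Submodule.smul_mem _ _ (Submodule.sub_mem _ hDegMem (Submodule.smul_mem _ _ hI))
  have hEb : Matrix.fromBlocks (0 : Matrix (Fin v) (Fin v) ℝ) 0 0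
      (1 : Matrix (Fin b) (Fin b) ℝ) ∈ W := by
    have e : Matrix.fromBlocks (0 : Matrix (Fin v) (Fin v) ℝ) 0 0
          (1 : Matrix (Fin b) (Fin b) ℝ)
        = (1 : Matrix (Fin v ⊕ Fin b) (Fin v ⊕ Fin b) ℝ)
          - Matrix.fromBlocks 1 0 0 0 := by
      rw [show (1 : Matrix (Fin v ⊕ Fin b) (Fin v ⊕ Fin b) ℝ)
          = Matrix.fromBlocks 1 0 0 1 from (Matrix.fromBlocks_one).symm,
        fromBlocks_sub, Matrix.fromBlocks_inj]
      exact ⟨by simp, by simp, by simp, by simp⟩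
    rw [e]
    exact Submodule.sub_mem _ hI hEv
  -- the four J blocks
  have eJvv : Matrix.fromBlocks (1 : Matrix (Fin v) (Fin v) ℝ) 0 0 0
        * Matrix.fromBlocks Jvv Jvb Jbv Jbb
        * Matrix.fromBlocks (1 : Matrix (Fin v) (Fin v) ℝ) 0 0 0
      = Matrix.fromBlocks Jvv 0 0 0 := by
    rw [Matrix.fromBlocks_multiply, Matrix.fromBlocks_multiply]
    simp
  have eJvb : Matrix.fromBlocks (1 : Matrix (Fin v) (Fin v) ℝ) 0 0 0
        * Matrix.fromBlocks Jvv Jvb Jbv Jbb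
        * Matrix.fromBlocks (0 : Matrix (Fin v) (Fin v) ℝ) 0 0 1
      = Matrix.fromBlocks 0 Jvb 0 0 := by
    rw [Matrix.fromBlocks_multiply, Matrix.fromBlocks_multiply]
    simp
  have eJbv : Matrix.fromBlocks (0 : Matrix (Fin v) (Fin v) ℝ) 0 0 1
        * Matrix.fromBlocks Jvv Jvb Jbv Jbb
        * Matrix.fromBlocks (1 : Matrix (Fin v) (Fin v) ℝ) 0 0 0
      = Matrix.fromBlocks 0 0 Jbv 0 := by
    rw [Matrix.fromBlocks_multiply, Matrix.fromBlocks_multiply]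
    simp
  have eJbb : Matrix.fromBlocks (0 : Matrix (Fin v) (Fin v) ℝ) 0 0 1
        * Matrix.fromBlocks Jvv Jvb Jbv Jbb
        * Matrix.fromBlocks (0 : Matrix (Fin v) (Fin v) ℝ) 0 0 1
      = Matrix.fromBlocks 0 0 0 Jbb := by
    rw [Matrix.fromBlocks_multiply, Matrix.fromBlocks_multiply]
    simp
  have mJvv : Matrix.fromBlocks Jvv 0 0 0 ∈ W := by
    rw [← eJvv]; exact cc_mul_mem hB (cc_mul_mem hB hEv hJmem) hEv
  have mJvb : Matrix.fromBlocks 0 Jvb 0 0 ∈ W := by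
    rw [← eJvb]; exact cc_mul_mem hB (cc_mul_mem hB hEv hJmem) hEb
  have mJbv : Matrix.fromBlocks 0 0 Jbv 0 ∈ W := by
    rw [← eJbv]; exact cc_mul_mem hB (cc_mul_mem hB hEb hJmem) hEv
  have mJbb : Matrix.fromBlocks 0 0 0 Jbb ∈ W := by
    rw [← eJbb]; exact cc_mul_mem hB (cc_mul_mem hB hEb hJmem) hEb
  -- M, Mᵀ, X blocks
  have mM : Matrix.fromBlocks 0 M 0 0 ∈ W := by
    have e : Matrix.fromBlocks (0 : Matrix (Fin v) (Fin v) ℝ) M 0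
          (0 : Matrix (Fin b) (Fin b) ℝ)
        = Matrix.fromBlocks 0 M Mᵀ X ⊙ Matrix.fromBlocks 0 Jvb 0 0 := by
      rw [hadamard_fromBlocks, Matrix.fromBlocks_inj]
      refine ⟨by simp, ?_, by simp, by simp⟩
      rw [hJvb, hadamard_JJ]
    rw [e]
    exact cc_hadamard_mem hB hmem mJvb
  have mMt : Matrix.fromBlocks 0 0 Mᵀ 0 ∈ W := by
    have e : Matrix.fromBlocks (0 : Matrix (Fin v) (Fin v) ℝ) 0 Mᵀ
          (0 : Matrix (Fin b) (Fin b) ℝ)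
        = Matrix.fromBlocks 0 M Mᵀ X ⊙ Matrix.fromBlocks 0 0 Jbv 0 := by
      rw [hadamard_fromBlocks, Matrix.fromBlocks_inj]
      refine ⟨by simp, by simp, ?_, by simp⟩
      rw [hJbv, hadamard_JJ]
    rw [e]
    exact cc_hadamard_mem hB hmem mJbv
  have mX : Matrix.fromBlocks 0 0 0 X ∈ W := by
    have e : Matrix.fromBlocks (0 : Matrix (Fin v) (Fin v) ℝ) 0 0 X
        = Matrix.fromBlocks 0 M Mᵀ X ⊙ Matrix.fromBlocks 0 0 0 Jbb := by
      rw [hadamard_fromBlocks, Matrix.fromBlocks_inj]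
      refine ⟨by simp, by simp, by simp, ?_⟩
      rw [hJbb, hadamard_JJ]
    rw [e]
    exact cc_hadamard_mem hB hmem mJbb
  -- the nine linearly independent matrices
  set FF : Fin 9 → Matrix (Fin v ⊕ Fin b) (Fin v ⊕ Fin b) ℝ :=
    ![Matrix.fromBlocks 1 0 0 0,
      Matrix.fromBlocks Jvv 0 0 0,
      Matrix.fromBlocks 0 M 0 0,
      Matrix.fromBlocks 0 Jvb 0 0,
      Matrix.fromBlocks 0 0 Mᵀ 0,
      Matrix.fromBlocks 0 0 Jbv 0,
      Matrix.fromBlocks 0 0 0 1,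
      Matrix.fromBlocks 0 0 0 X,
      Matrix.fromBlocks 0 0 0 Jbb] with hFF
  have hp1q1 : p1 ≠ q1 := by
    intro h
    rw [h, hXdiag] at hX1
    norm_num at hX1
  have hmemFF : ∀ t, FF t ∈ W := by
    intro t
    fin_cases t
    · exact hEv
    · exact mJvv
    · exact mM
    · exact mJvb
    · exact mMt
    · exact mJbv
    · exact hEb
    · exact mX
    · exact mJbb
  have hli : LinearIndependent ℝ FF := by
    rw [Fintype.linearIndependent_iff]
    intro g hg
    have hval : ∀ u w, (∑ t, g t • FF t) u w = 0 := by
      intro u w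
      rw [hg]
      rfl
    have hexp : ∀ u w, g 0 * FF 0 u w + (g 1 * FF 1 u w + (g 2 * FF 2 u w
        + (g 3 * FF 3 u w + (g 4 * FF 4 u w + (g 5 * FF 5 u w + (g 6 * FF 6 u w
        + (g 7 * FF 7 u w + g 8 * FF 8 u w))))))) = 0 := by
      intro u w
      have h := hval u w
      rw [Matrix.sum_apply] at h
      rw [sum9 (fun t => (g t • FF t) u w)] at h
      simpa only [Matrix.smul_apply, smul_eq_mul] using h
    have E1 := hexp (Sum.inl i0) (Sum.inl i0)
    have E2 := hexp (Sum.inl i0) (Sum.inl i1)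
    have E3 := hexp (Sum.inl iM) (Sum.inr jM)
    have E4 := hexp (Sum.inl iz) (Sum.inr jz)
    have E5 := hexp (Sum.inr jM) (Sum.inl iM)
    have E6 := hexp (Sum.inr jz) (Sum.inl iz)
    have E7 := hexp (Sum.inr p2) (Sum.inr p2)
    have E8 := hexp (Sum.inr p1) (Sum.inr q1)
    have E9 := hexp (Sum.inr p2) (Sum.inr q2)
    have hFF0 : FF 0 = Matrix.fromBlocks 1 0 0 0 := by rw [hFF]; rfl
    have hFF1 : FF 1 = Matrix.fromBlocks Jvv 0 0 0 := by rw [hFF]; rfl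
    have hFF2 : FF 2 = Matrix.fromBlocks 0 M 0 0 := by rw [hFF]; rfl
    have hFF3 : FF 3 = Matrix.fromBlocks 0 Jvb 0 0 := by rw [hFF]; rfl
    have hFF4 : FF 4 = Matrix.fromBlocks 0 0 Mᵀ 0 := by rw [hFF]; rfl
    have hFF5 : FF 5 = Matrix.fromBlocks 0 0 Jbv 0 := by rw [hFF]; rfl
    have hFF6 : FF 6 = Matrix.fromBlocks 0 0 0 1 := by rw [hFF]; rfl
    have hFF7 : FF 7 = Matrix.fromBlocks 0 0 0 X := by rw [hFF]; rfl
    have hFF8 : FF 8 = Matrix.fromBlocks 0 0 0 Jbb := by rw [hFF]; rfl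
    simp only [hFF0, hFF1, hFF2, hFF3, hFF4, hFF5, hFF6, hFF7, hFF8,
      Matrix.fromBlocks_apply₁₁, Matrix.fromBlocks_apply₁₂,
      Matrix.fromBlocks_apply₂₁, Matrix.fromBlocks_apply₂₂,
      Matrix.zero_apply, Matrix.one_apply_eq,
      Matrix.one_apply_ne hi01, Matrix.one_apply_ne hp1q1, Matrix.one_apply_ne hq2,
      Matrix.transpose_apply, hM1, hM0, hX1, hX0, hXdiag, hJvv, hJvb, hJbv, hJbb,
      JJ_apply, mul_one, mul_zero, add_zero, zero_add] at E1 E2 E3 E4 E5 E6 E7 E8 E9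
    intro t
    fin_cases t
    · show g 0 = 0; linarith
    · show g 1 = 0; linarith
    · show g 2 = 0; linarith
    · show g 3 = 0; linarith
    · show g 4 = 0; linarith
    · show g 5 = 0; linarith
    · show g 6 = 0; linarith
    · show g 7 = 0; linarith
    · show g 8 = 0; linarith
  have := card_le_of_li (A := B) FF hli hmemFF
  simpa using this

end Stmt11Aux

set_option maxHeartbeats 4000000 in
/-- Class 1 converse -/
theorem stmt11 (θ1 θ2 : ℤ) (hθ1 : 1 ≤ θ1) (hθ2 : θ2 ≤ -2)
    (v b : ℕ) (hv : 0 < v) (hb : 0 < b)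
    (hveq : (v : ℝ) = (θ2 : ℝ) * ((θ2 : ℝ) + (θ1 : ℝ) + (θ1 : ℝ) * (θ2 : ℝ)
      - (θ2 : ℝ) ^ 2 * (θ1 : ℝ)) / ((θ1 : ℝ) + 1))
    (hbeq : (b : ℝ) = (1 + (θ1 : ℝ) - (θ2 : ℝ) * (θ1 : ℝ))
      * ((θ2 : ℝ) + (θ1 : ℝ) + (θ1 : ℝ) * (θ2 : ℝ) - (θ2 : ℝ) ^ 2 * (θ1 : ℝ))
      / ((θ2 : ℝ) * ((θ1 : ℝ) + 1)))
    (M : Matrix (Fin v) (Fin b) ℝ)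
    (hM01 : ∀ i j, M i j = 0 ∨ M i j = 1)
    (hrow : ∀ i, ∑ j, M i j = (θ1 : ℝ) * (1 - (θ2 : ℝ)) + 1)
    (hcol : ∀ j, ∑ i, M i j = (θ2 : ℝ) ^ 2)
    (hMMt : M * Mᵀ = (((θ1 : ℝ) * (1 - (θ2 : ℝ)) + 1) - ((θ1 : ℝ) + 1))
        • (1 : Matrix (Fin v) (Fin v) ℝ)
      + ((θ1 : ℝ) + 1) • Matrix.of (fun _ _ => 1))
    (X : Matrix (Fin b) (Fin b) ℝ)
    (hXsymm : Xᵀ = X) (hXdiag : ∀ i, X i i = 0) (hX01 : ∀ i j, X i j = 0 ∨ X i j = 1)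
    (hXne0 : X ≠ 0)
    (hXneJ : X ≠ Matrix.of (fun _ _ => 1) - (1 : Matrix (Fin b) (Fin b) ℝ))
    (hMtM : Mᵀ * M = (θ2 : ℝ) ^ 2 • (1 : Matrix (Fin b) (Fin b) ℝ) + (-(θ2 : ℝ)) • X
      + (0 : ℝ) • (Matrix.of (fun _ _ => 1) - (1 : Matrix (Fin b) (Fin b) ℝ) - X)) :
    ∀ (G : SimpleGraph (Fin v ⊕ Fin b)) [DecidableRel G.Adj],
      SimpleGraph.adjMatrix ℝ G = Matrix.fromBlocks 0 M Mᵀ X →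
      G.Connected ∧
      {θ : ℝ | adjEig G θ}
        = {(θ2 : ℝ) * ((θ1 : ℝ) * (θ2 : ℝ) - (θ1 : ℝ) - 1), (θ1 : ℝ), (θ2 : ℝ)} ∧
      HasCoherentRank G 9 := by
  intro G _inst hadj
  classical
  open Stmt11Aux in
  set a : ℝ := (θ1 : ℝ) with ha
  set c : ℝ := (θ2 : ℝ) with hc
  have ht1 : (1:ℝ) ≤ a := by rw [ha]; exact_mod_cast hθ1
  have ht2 : c ≤ -2 := by rw [hc]; exact_mod_cast hθ2
  have hc0 : c ≠ 0 := by linarith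
  have hcneg : -c ≠ 0 := by linarith
  have hc2 : (c^2 : ℝ) ≠ 0 := pow_ne_zero 2 hc0
  -- rewrite the all-ones matrices as JJ
  rw [show Matrix.of (fun _ _ => (1:ℝ)) = Stmt11Aux.JJ (Fin v) (Fin v) from rfl] at hMMt
  rw [show Matrix.of (fun _ _ => (1:ℝ)) = Stmt11Aux.JJ (Fin b) (Fin b) from rfl] at hMtM hXneJ
  set Jvv := Stmt11Aux.JJ (Fin v) (Fin v) with hJvv
  set Jvb := Stmt11Aux.JJ (Fin v) (Fin b) with hJvb
  set Jbv := Stmt11Aux.JJ (Fin b) (Fin v) with hJbv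
  set Jbb := Stmt11Aux.JJ (Fin b) (Fin b) with hJbb
  -- normalized products
  have hMMt' : M * Mᵀ = (-(a*c)) • 1 + (a+1) • Jvv := by
    rw [hMMt]; congr 2; ring
  have hS : Mᵀ * M = c^2 • 1 + (-c) • X := by
    rw [hMtM, zero_smul, add_zero]
  have e1 : (-c) • X = Mᵀ * M - c^2 • (1 : Matrix (Fin b) (Fin b) ℝ) := by
    rw [hS]; module
  have h_MJbb : M * Jbb = (a*(1-c)+1) • Jvb := Stmt11Aux.mulJJ M _ hrow
  have h_MJbv : M * Jbv = (a*(1-c)+1) • Jvv := Stmt11Aux.mulJJ M _ hrow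
  have h_JvvM : Jvv * M = c^2 • Jvb := Stmt11Aux.JJmul M _ hcol
  have h_JbvM : Jbv * M = c^2 • Jbb := Stmt11Aux.JJmul M _ hcol
  have hrowT : ∀ j, ∑ i, Mᵀ j i = c^2 := fun j => by
    simpa [Matrix.transpose_apply] using hcol j
  have hcolT : ∀ i, ∑ j, Mᵀ j i = a*(1-c)+1 := fun i => by
    simpa [Matrix.transpose_apply] using hrow i
  have h_MtJvv : Mᵀ * Jvv = c^2 • Jbv := Stmt11Aux.mulJJ Mᵀ _ hrowT
  have h_MtJvb : Mᵀ * Jvb = c^2 • Jbb := Stmt11Aux.mulJJ Mᵀ _ hrowT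
  have h_JvbMt : Jvb * Mᵀ = (a*(1-c)+1) • Jvv := Stmt11Aux.JJmul Mᵀ _ hcolT
  have h_JbbMt : Jbb * Mᵀ = (a*(1-c)+1) • Jbv := Stmt11Aux.JJmul Mᵀ _ hcolT
  -- X row sums
  have hXJbb : X * Jbb = (a*c^2 - a*c) • Jbb := by
    apply smul_right_injective _ hcneg
    show (-c) • (X * Jbb) = (-c) • ((a*c^2 - a*c) • Jbb)
    calc (-c) • (X * Jbb) = ((-c) • X) * Jbb := by rw [Matrix.smul_mul]
      _ = (Mᵀ * M) * Jbb - c^2 • Jbb := by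
          rw [e1, Matrix.sub_mul, Matrix.smul_mul, Matrix.one_mul]
      _ = Mᵀ * (M * Jbb) - c^2 • Jbb := by rw [Matrix.mul_assoc]
      _ = ((a*(1-c)+1) * c^2) • Jbb - c^2 • Jbb := by
          rw [h_MJbb, Matrix.mul_smul, h_MtJvb, smul_smul]
      _ = (-c) • ((a*c^2 - a*c) • Jbb) := by module
  have hXrow : ∀ j, ∑ l, X j l = a*c^2 - a*c := by
    intro j
    have := congrFun (congrFun hXJbb j) j
    simp only [Matrix.mul_apply, Matrix.smul_apply, smul_eq_mul, hJbb,
      Stmt11Aux.JJ_apply, mul_one] at this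
    exact this
  have hXcol : ∀ l, ∑ j, X j l = a*c^2 - a*c := by
    intro l
    have hsy : ∀ j, X j l = X l j := fun j => by
      have := congrFun (congrFun hXsymm l) j
      simpa [Matrix.transpose_apply] using this
    simp only [hsy]
    exact hXrow l
  have h_XJbv : X * Jbv = (a*c^2 - a*c) • Jbv := Stmt11Aux.mulJJ X _ hXrow
  have h_JvbX : Jvb * X = (a*c^2 - a*c) • Jvb := Stmt11Aux.JJmul X _ hXcol
  have h_JbbX : Jbb * X = (a*c^2 - a*c) • Jbb := Stmt11Aux.JJmul X _ hXcol
  -- M * X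
  have hMX : M * X = (a+c) • M + (-(c*(a+1))) • Jvb := by
    apply smul_right_injective _ hcneg
    show (-c) • (M * X) = (-c) • ((a+c) • M + (-(c*(a+1))) • Jvb)
    calc (-c) • (M * X) = M * ((-c) • X) := by rw [Matrix.mul_smul]
      _ = M * (Mᵀ * M) - c^2 • M := by
          rw [e1, Matrix.mul_sub, Matrix.mul_smul, Matrix.mul_one]
      _ = (M * Mᵀ) * M - c^2 • M := by rw [Matrix.mul_assoc]
      _ = ((-(a*c)) • M + ((a+1) * c^2) • Jvb) - c^2 • M := by
          rw [hMMt', Matrix.add_mul, Matrix.smul_mul, Matrix.smul_mul, Matrix.one_mul,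
            h_JvvM, smul_smul]
      _ = (-c) • ((a+c) • M + (-(c*(a+1))) • Jvb) := by module
  have hXMt : X * Mᵀ = (a+c) • Mᵀ + (-(c*(a+1))) • Jbv := by
    have h := congrArg Matrix.transpose hMX
    rw [Matrix.transpose_mul, hXsymm, Matrix.transpose_add, Matrix.transpose_smul,
      Matrix.transpose_smul] at h
    simpa [hJvb, hJbv] using h
  -- X * X
  have hSS : (Mᵀ*M)*(Mᵀ*M) = (-(a*c))•(Mᵀ*M) + ((a+1)*(c^2*c^2))•Jbb := by
    calc (Mᵀ*M)*(Mᵀ*M) = Mᵀ*((M*Mᵀ)*M) := by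
          simp only [Matrix.mul_assoc]
      _ = Mᵀ*((-(a*c)) • M + ((a+1) * c^2) • Jvb) := by
          rw [hMMt', Matrix.add_mul, Matrix.smul_mul, Matrix.smul_mul, Matrix.one_mul,
            h_JvvM, smul_smul]
      _ = (-(a*c))•(Mᵀ*M) + ((a+1)*(c^2*c^2))•Jbb := by
          rw [Matrix.mul_add, Matrix.mul_smul, Matrix.mul_smul, h_MtJvb, smul_smul]
          module
  have hXX : X*X = (-(c*(a+c))) • 1 + (a+2*c) • X + ((a+1)*c^2) • Jbb := by
    apply smul_right_injective _ hc2
    show (c^2) • (X*X) = (c^2) • _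
    have e2 : (c^2) • (X*X) = ((-c)•X) * ((-c)•X) := by
      rw [Matrix.smul_mul, Matrix.mul_smul, smul_smul]
      congr 1
      ring
    rw [e2, e1]
    simp only [Matrix.sub_mul, Matrix.mul_sub, Matrix.smul_mul, Matrix.mul_smul,
      Matrix.one_mul, Matrix.mul_one, smul_smul]
    rw [hSS, hS]
    module
  -- scalar inequalities
  have ha1 : (0:ℝ) < a + 1 := by linarith
  have hvmul : (v:ℝ) * (a+1) = c * (c + a + a*c - c^2*a) := by
    rw [hveq, div_mul_cancel₀]
    exact ne_of_gt ha1
  have hc4 : (4:ℝ) ≤ c^2 := by nlinarith [sq_nonneg (c+2)]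
  have hkey : (0:ℝ) ≤ c + c^2 - c^3 - 2 := by
    nlinarith [mul_nonneg (show (0:ℝ) ≤ -c-2 by linarith) (sq_nonneg c),
      mul_nonneg (show (0:ℝ) ≤ 2-3*c by linarith) (show (0:ℝ) ≤ -c-1 by linarith)]
  have hv2R : (2:ℝ) ≤ (v:ℝ) := by
    nlinarith [hvmul, mul_nonneg (show (0:ℝ) ≤ a-1 by linarith) hkey, hc4, hkey]
  have hv2 : 2 ≤ v := by exact_mod_cast hv2R
  have hkvR : c^2 < (v:ℝ) := by
    have hp2 : (0:ℝ) < c^2 - 1 := by nlinarith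
    nlinarith [hvmul, mul_pos (mul_pos (show (0:ℝ) < a by linarith)
      (show (0:ℝ) < -c by linarith)) hp2]
  have hrne : a*(1-c)+1 ≠ 0 := by nlinarith
  -- vertices
  set i0 : Fin v := ⟨0, hv⟩ with hi0def
  set j0 : Fin b := ⟨0, hb⟩ with hj0def
  set AM := Matrix.fromBlocks 0 M Mᵀ X with hAM
  -- adjacency characterization
  have hAdjIff : ∀ u w, G.Adj u w ↔ AM u w = 1 := by
    intro u w
    constructor
    · intro h
      have := congrFun (congrFun hadj u) w
      rw [SimpleGraph.adjMatrix_apply, if_pos h] at this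
      exact this.symm
    · intro h
      by_contra hn
      have := congrFun (congrFun hadj u) w
      rw [SimpleGraph.adjMatrix_apply, if_neg hn, h] at this
      norm_num at this
  have hadj_lr : ∀ i j, M i j = 1 → G.Adj (Sum.inl i) (Sum.inr j) := by
    intro i j h
    rw [hAdjIff, hAM]
    simpa [Matrix.fromBlocks_apply₁₂] using h
  -- connectivity
  have hreachL : ∀ i, G.Reachable (Sum.inl i0) (Sum.inl i) := by
    intro i
    rcases eq_or_ne i0 i with rfl | hne
    · exact SimpleGraph.Reachable.refl _
    · have hent : (M * Mᵀ) i0 i = a + 1 := by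
        rw [hMMt']
        simp [Matrix.one_apply_ne hne, hJvv, Stmt11Aux.JJ]
      have hex : ∃ j, M i0 j = 1 ∧ M i j = 1 := by
        by_contra hno
        push_neg at hno
        have hz : ∀ j, M i0 j * M i j = 0 := by
          intro j
          rcases hM01 i0 j with h0|h1
          · rw [h0, zero_mul]
          · rcases hM01 i j with h0'|h1'
            · rw [h0', mul_zero]
            · exact absurd h1' (hno j h1)
        rw [Matrix.mul_apply] at hent
        simp only [Matrix.transpose_apply] at hent
        rw [Finset.sum_eq_zero (fun j _ => hz j)] at hent
        linarith
      obtain ⟨j, h1, h2⟩ := hex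
      exact ((hadj_lr _ _ h1).reachable).trans ((hadj_lr _ _ h2).symm.reachable)
  have hreach : ∀ u, G.Reachable (Sum.inl i0) u := by
    intro u
    cases u with
    | inl i => exact hreachL i
    | inr j =>
      have hex : ∃ i, M i j = 1 := by
        by_contra hno
        push_neg at hno
        have hz : ∀ i, M i j = 0 := fun i => (hM01 i j).resolve_right (hno i)
        have hcc := hcol j
        rw [Finset.sum_eq_zero (fun i _ => hz i)] at hcc
        nlinarith
      obtain ⟨i, h1⟩ := hex
      exact (hreachL i).trans (hadj_lr i j h1).reachable
  have hconn : G.Connected := by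
    rw [SimpleGraph.connected_iff]
    exact ⟨fun u w => (hreach u).symm.trans (hreach w), ⟨Sum.inl i0⟩⟩
  -- the quotient-polynomial matrix
  set QF := Matrix.fromBlocks ((a+1) • Jvv) ((-(c*(a+1))) • Jvb)
      ((-(c*(a+1))) • Jbv) ((c^2*(a+1)) • Jbb) with hQF
  have hQeq : AM * AM + (a*c) • (1 : Matrix (Fin v ⊕ Fin b) (Fin v ⊕ Fin b) ℝ)
      = (a+c) • AM + QF := by
    rw [hAM, hQF, Matrix.fromBlocks_multiply, ← Matrix.fromBlocks_one,
      Matrix.fromBlocks_smul, Matrix.fromBlocks_smul, Matrix.fromBlocks_add,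
      Matrix.fromBlocks_add, Matrix.fromBlocks_inj]
    refine ⟨?_, ?_, ?_, ?_⟩
    · simp only [Matrix.zero_mul, Matrix.mul_zero, zero_add, add_zero, smul_zero]
      rw [hMMt']; module
    · simp only [Matrix.zero_mul, Matrix.mul_zero, zero_add, add_zero, smul_zero]
      rw [hMX]
    · simp only [Matrix.zero_mul, Matrix.mul_zero, zero_add, add_zero, smul_zero]
      rw [hXMt]
    · rw [hS, hXX]; module
  have hAQ : AM * QF = (c*(a*c - a - 1)) • QF := by
    rw [hAM, hQF, Matrix.fromBlocks_multiply, Matrix.fromBlocks_smul,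
      Matrix.fromBlocks_inj]
    refine ⟨?_, ?_, ?_, ?_⟩
    · rw [Matrix.zero_mul, Matrix.mul_smul, h_MJbv]; module
    · rw [Matrix.zero_mul, Matrix.mul_smul, h_MJbb]; module
    · rw [Matrix.mul_smul, Matrix.mul_smul, h_MtJvv, h_XJbv]; module
    · rw [Matrix.mul_smul, Matrix.mul_smul, h_MtJvb, hXJbb]; module
  -- Jvv, Jbv kill mean-zero vectors
  -- eigenvalue set
  have heig : {θ : ℝ | adjEig G θ} = {c*(a*c - a - 1), a, c} := by
    ext θ
    simp only [Set.mem_setOf_eq, Set.mem_insert_iff, Set.mem_singleton_iff]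
    constructor
    · rintro ⟨f, hf0, hfe⟩
      rw [hadj] at hfe
      have h1 := congrArg (fun N => N *ᵥ f) hQeq
      simp only [Matrix.add_mulVec, Matrix.smul_mulVec, Matrix.one_mulVec,
        ← Matrix.mulVec_mulVec] at h1
      rw [hfe] at h1
      simp only [Matrix.mulVec_smul, hfe] at h1
      have h2 : QF *ᵥ f = θ•(θ•f) + (a*c)•f - (a+c)•(θ•f) := eq_sub_of_add_eq' h1.symm
      have hFf : QF *ᵥ f = ((θ-a)*(θ-c)) • f := by rw [h2]; module
      have h3 : AM *ᵥ (QF *ᵥ f) = (c*(a*c - a - 1)) • (QF *ᵥ f) := by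
        rw [Matrix.mulVec_mulVec, hAQ, Matrix.smul_mulVec]
      rw [hFf] at h3
      simp only [Matrix.mulVec_smul, hfe] at h3
      have h4 : (((θ-a)*(θ-c))*(θ-(c*(a*c - a - 1)))) • f = 0 := by
        have e5 : (((θ-a)*(θ-c))*(θ-(c*(a*c - a - 1)))) • f
            = ((θ-a)*(θ-c))•(θ•f) - (c*(a*c - a - 1))•(((θ-a)*(θ-c))•f) := by module
        rw [e5, h3, sub_self]
      rcases smul_eq_zero.mp h4 with hs | hf
      · rcases mul_eq_zero.mp hs with hs2 | hs3
        · rcases mul_eq_zero.mp hs2 with hsa | hsc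
          · exact Or.inr (Or.inl (by linarith [sub_eq_zero.mp hsa]))
          · exact Or.inr (Or.inr (by linarith [sub_eq_zero.mp hsc]))
        · exact Or.inl (by linarith [sub_eq_zero.mp hs3])
      · exact absurd hf hf0
    · have heig0 : adjEig G (c*(a*c - a - 1)) := by
        refine ⟨Sum.elim (fun _ => 1) (fun _ => -c), ?_, ?_⟩
        · intro h
          have := congrFun h (Sum.inl i0)
          norm_num at this
        · rw [hadj, hAM, Stmt11Aux.elim_mulVec, Stmt11Aux.smul_elim]
          refine Stmt11Aux.elim_congr ?_ ?_
          · funext i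
            simp only [Pi.add_apply, Matrix.zero_mulVec, Pi.zero_apply, zero_add,
              Matrix.mulVec, dotProduct, Pi.smul_apply, smul_eq_mul]
            rw [← Finset.sum_mul, hrow i]; ring
          · funext j
            simp only [Pi.add_apply, Matrix.mulVec, dotProduct,
              Matrix.transpose_apply, Pi.smul_apply, smul_eq_mul, mul_one]
            rw [hcol j, ← Finset.sum_mul, hXrow j]; ring
      have heiga : adjEig G a := by
        have hi1 : (⟨1, by omega⟩ : Fin v) ≠ i0 := by
          rw [hi0def]
          simp [Fin.ext_iff]
        set i1 : Fin v := ⟨1, by omega⟩ with hi1def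
        set f : Fin v → ℝ :=
          fun i => (if i = i0 then (1:ℝ) else 0) - (if i = i1 then 1 else 0) with hfdef
        have hfsum : ∑ i, f i = 0 := by
          rw [hfdef]
          simp [Finset.sum_sub_distrib]
        have hJvvf : Jvv *ᵥ f = 0 := by
          rw [hJvv, Stmt11Aux.JJ_mulVec]
          funext i'
          simp [hfsum]
        have hJbvf : Jbv *ᵥ f = 0 := by
          rw [hJbv, Stmt11Aux.JJ_mulVec]
          funext j'
          simp [hfsum]
        have hfi0 : f i0 = 1 := by
          rw [hfdef]
          simp only [if_pos rfl, if_neg (fun h : i0 = i1 => hi1 h.symm)]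
          norm_num
        refine ⟨Sum.elim f ((-(1:ℝ)/c) • (Mᵀ *ᵥ f)), ?_, ?_⟩
        · intro h
          have h0 := congrFun h (Sum.inl i0)
          simp only [Sum.elim_inl, Pi.zero_apply] at h0
          rw [hfi0] at h0
          norm_num at h0
        · rw [hadj, hAM, Stmt11Aux.elim_mulVec, Stmt11Aux.smul_elim]
          refine Stmt11Aux.elim_congr ?_ ?_
          · rw [Matrix.zero_mulVec, zero_add, Matrix.mulVec_smul,
              Matrix.mulVec_mulVec, hMMt', Matrix.add_mulVec,
              Matrix.smul_mulVec, Matrix.smul_mulVec,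
              Matrix.one_mulVec, hJvvf]
            simp only [smul_zero, add_zero, smul_smul]
            rw [show -(1:ℝ)/c * -(a*c) = a from by field_simp]
          · rw [Matrix.mulVec_smul, Matrix.mulVec_mulVec, hXMt, Matrix.add_mulVec,
              Matrix.smul_mulVec, Matrix.smul_mulVec, hJbvf]
            simp only [smul_zero, add_zero, smul_smul]
            match_scalars <;> (field_simp; try ring)
      have heigc : adjEig G c := by
        refine ⟨Sum.elim (fun _ => 1) (fun _ => c/(a*(1-c)+1)), ?_, ?_⟩
        · intro h
          have := congrFun h (Sum.inl i0)
          norm_num at this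
        · rw [hadj, hAM, Stmt11Aux.elim_mulVec, Stmt11Aux.smul_elim]
          refine Stmt11Aux.elim_congr ?_ ?_
          · funext i
            simp only [Pi.add_apply, Matrix.zero_mulVec, Pi.zero_apply, zero_add,
              Matrix.mulVec, dotProduct, Pi.smul_apply, smul_eq_mul]
            rw [← Finset.sum_mul, hrow i]
            field_simp
          · funext j
            simp only [Pi.add_apply, Matrix.mulVec, dotProduct,
              Matrix.transpose_apply, Pi.smul_apply, smul_eq_mul, mul_one]
            rw [hcol j, ← Finset.sum_mul, hXrow j]
            field_simp
            try ring
      rintro (rfl | rfl | rfl)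
      · exact heig0
      · exact heiga
      · exact heigc
  -- coherent rank
  refine ⟨hconn, heig, ?_⟩
  constructor
  · -- a rank 9 coherent configuration exists
    obtain ⟨A9, hcc, hspan⟩ := Stmt11Aux.partA a c M X hM01 hX01 hXdiag hXsymm
      hMMt' hS hMX hXMt hXX h_MJbb h_MJbv h_JvvM h_JbvM h_MtJvv h_MtJvb h_JvbMt
      h_JbbMt h_XJbv hXJbb h_JvbX h_JbbX
    exact ⟨A9, hcc, by rw [hadj, hAM]; exact hspan⟩
  · -- no smaller coherent configuration works
    rintro m ⟨B, hB, hmemB⟩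
    rw [hadj, hAM] at hmemB
    have hneS : (a*(1-c)+1) - (c^2 + (a*c^2 - a*c)) ≠ 0 := by
      intro h
      nlinarith [hc4]
    obtain ⟨iM, jM, hM1⟩ : ∃ i j, M i j = 1 := by
      by_contra hno
      push_neg at hno
      have hz : ∀ i, M i j0 = 0 := fun i => (hM01 i j0).resolve_right (hno i j0)
      have hcc2 := hcol j0
      rw [Finset.sum_eq_zero (fun i _ => hz i)] at hcc2
      nlinarith
    obtain ⟨iz, jz, hM0⟩ : ∃ i j, M i j = 0 := by
      by_contra hno
      push_neg at hno
      have hz : ∀ i, M i j0 = 1 := fun i => (hM01 i j0).resolve_left (hno i j0)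
      have h2 := hcol j0
      rw [Finset.sum_congr rfl (fun i _ => hz i), Finset.sum_const, Finset.card_univ,
        Fintype.card_fin, nsmul_eq_mul, mul_one] at h2
      nlinarith [hkvR]
    obtain ⟨p1, q1, hX1⟩ : ∃ p q, X p q = 1 := by
      by_contra hno
      push_neg at hno
      exact hXne0 (by ext p q; exact (hX01 p q).resolve_right (hno p q))
    obtain ⟨p2, q2, hpq, hX0⟩ : ∃ p q, p ≠ q ∧ X p q = 0 := by
      have hd : ∃ p q, X p q ≠ (Jbb - (1 : Matrix (Fin b) (Fin b) ℝ)) p q := by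
        by_contra hno
        push_neg at hno
        exact hXneJ (by ext p q; exact hno p q)
      obtain ⟨p, q, hpq0⟩ := hd
      rcases eq_or_ne p q with rfl | hne2
      · exfalso
        apply hpq0
        simp [Matrix.sub_apply, Matrix.one_apply_eq, hXdiag, hJbb, Stmt11Aux.JJ]
      · refine ⟨p, q, hne2, ?_⟩
        have hJe : (Jbb - (1 : Matrix (Fin b) (Fin b) ℝ)) p q = 1 := by
          simp [Matrix.sub_apply, Matrix.one_apply_ne hne2, hJbb, Stmt11Aux.JJ]
        rcases hX01 p q with h | h
        · exact h
        · exact absurd (by rw [h, hJe]) hpq0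
    have hi01 : i0 ≠ (⟨1, by omega⟩ : Fin v) := by
      rw [hi0def]
      simp [Fin.ext_iff]
    exact Stmt11Aux.partB a c M X hXdiag hMMt' hS hXX hneS i0 ⟨1, by omega⟩ hi01
      iM jM hM1 iz jz hM0 p1 q1 hX1 p2 q2 hpq hX0 B hB hmemB
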